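/- The degree-6 weighted theta coefficients of the D₄ lattice form a rank-one family: for all harmonic polynomials P and Q of degree 6 in 4 variables and all positive integers m and n, (∑_{x∈(D₄)_{2m}} P(x))·(∑_{x∈(D₄)_{2n}} Q(x)) = (∑_{x∈(D₄)_{2n}} P(x))·(∑_{x∈(D₄)_{2m}} Q(x)). (This expresses that the image of the degree-6 theta map of D₄ is the one-dimensional space of newforms of weight 8 and level 2, spanned by η(z)⁸η(2z)⁸.) -/

import Mathlib

open MvPolynomial

/-- A polynomial `P ∈ ℝ[x₁,…,x_d]` is *harmonic of degree `ℓ`* if it is homogeneous of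
degree `ℓ` and is annihilated by the Laplacian `∑ⱼ ∂²/∂xⱼ²`. -/
def IsHarmonic {d : ℕ} (ℓ : ℕ) (P : MvPolynomial (Fin d) ℝ) : Prop :=
  P.IsHomogeneous ℓ ∧ ∑ j : Fin d, pderiv j (pderiv j P) = 0

/-- The shell `{x ∈ ℤ^d : x₁² + ⋯ + x_d² = n}` as a `Finset`.  (The bounding box
`Finset.Icc` is harmless: any integer solution satisfies `|x i| ≤ x i ^ 2 ≤ n`.) -/
noncomputable def intShell (d n : ℕ) : Finset (Fin d → ℤ) :=
  (Finset.Icc (fun _ => -(n : ℤ)) (fun _ => (n : ℤ))).filter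
    (fun x => ∑ i, x i ^ 2 = (n : ℤ))

section Aux

lemma mem_intShell {x : Fin 4 → ℤ} {n : ℕ} :
    x ∈ intShell 4 n ↔ ∑ i, x i ^ 2 = (n : ℤ) := by
  constructor
  · intro h; exact (Finset.mem_filter.1 h).2
  · intro h
    refine Finset.mem_filter.2 ⟨Finset.mem_Icc.2 ⟨?_, ?_⟩, h⟩ <;>
    · intro i
      have h1 : x i ^ 2 ≤ (n : ℤ) := by
        rw [← h]
        exact Finset.single_le_sum (f := fun j => x j ^ 2) (fun j _ => sq_nonneg _)
          (Finset.mem_univ i)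
      simp only
      nlinarith [sq_nonneg (x i + 1), sq_nonneg (x i - 1)]

/-- moment of the shell -/
noncomputable def Mmom (n : ℕ) (α : Fin 4 → ℕ) : ℝ :=
  ∑ x ∈ intShell 4 n, ∏ i, (x i : ℝ) ^ α i

lemma update_prod_eq (x : Fin 4 → ℤ) (α : Fin 4 → ℕ) (i0 : Fin 4) (hodd : Odd (α i0)) :
    ∏ i, ((Function.update x i0 (-x i0) i : ℤ) : ℝ) ^ α i
      = -∏ i, ((x i : ℤ) : ℝ) ^ α i := by
  rw [Finset.prod_eq_mul_prod_sdiff_singleton_of_mem (Finset.mem_univ i0)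
      (fun i => ((Function.update x i0 (-x i0) i : ℤ) : ℝ) ^ α i),
    Finset.prod_eq_mul_prod_sdiff_singleton_of_mem (Finset.mem_univ i0)
      (fun i => ((x i : ℤ) : ℝ) ^ α i)]
  have h1 : ∀ i ∈ Finset.univ \ {i0},
      ((Function.update x i0 (-x i0) i : ℤ) : ℝ) ^ α i = ((x i : ℤ) : ℝ) ^ α i := by
    intro i hi
    rw [Function.update_of_ne (by simpa using (Finset.mem_sdiff.1 hi).2)]
  rw [Finset.prod_congr rfl h1, Function.update_self]
  push_cast
  rw [hodd.neg_pow]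
  ring

lemma update_mem_shell {n : ℕ} {x : Fin 4 → ℤ} (hx : x ∈ intShell 4 n) (i0 : Fin 4) :
    Function.update x i0 (-x i0) ∈ intShell 4 n := by
  rw [mem_intShell] at hx ⊢
  rw [← hx]
  apply Finset.sum_congr rfl
  intro i _
  by_cases hi : i = i0
  · subst hi; rw [Function.update_self]; ring
  · rw [Function.update_of_ne hi]

lemma Mmom_odd (n : ℕ) (α : Fin 4 → ℕ) (i0 : Fin 4) (h : α i0 % 2 = 1) :
    Mmom n α = 0 := by
  have hodd : Odd (α i0) := Nat.odd_iff.2 h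
  apply Finset.sum_involution (fun x _ => Function.update x i0 (-x i0))
  · intro x hx
    rw [update_prod_eq x α i0 hodd]; ring
  · intro x hx hfx
    intro heq
    apply hfx
    have : x i0 = 0 := by
      have := congrFun heq i0
      rw [Function.update_self] at this
      omega
    rw [Finset.prod_eq_zero (Finset.mem_univ i0)]
    rw [this]
    simp only [Int.cast_zero]
    exact zero_pow (by omega)
  · intro x hx
    funext i
    by_cases hi : i = i0
    · subst hi; simp
    · simp [Function.update_of_ne hi]
  · intro x hx; exact update_mem_shell hx i0

lemma shell_comp_mem {n : ℕ} {x : Fin 4 → ℤ} (hx : x ∈ intShell 4 n) (π : Equiv.Perm (Fin 4)) :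
    x ∘ π ∈ intShell 4 n := by
  rw [mem_intShell] at hx ⊢
  rw [← hx]
  exact Equiv.sum_comp π (fun i => x i ^ 2)

lemma Mmom_comp (n : ℕ) (α : Fin 4 → ℕ) (π : Equiv.Perm (Fin 4)) :
    Mmom n (α ∘ π) = Mmom n α := by
  unfold Mmom
  apply Finset.sum_nbij' (i := fun x => x ∘ ⇑π⁻¹) (j := fun x => x ∘ ⇑π)
  · intro x hx; exact shell_comp_mem hx π⁻¹
  · intro x hx; exact shell_comp_mem hx π
  · intro x _; funext i; simp
  · intro x _; funext i; simp
  · intro x _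
    have h2 : ∀ i, (x ∘ ⇑π⁻¹) (π i) = x i := by intro i; simp
    calc ∏ i, ((x i : ℤ) : ℝ) ^ (α ∘ ⇑π) i
        = ∏ i, (((x ∘ ⇑π⁻¹) (π i) : ℤ) : ℝ) ^ α (π i) := by
          apply Finset.prod_congr rfl; intro i _; rw [h2]; rfl
      _ = ∏ i, (((x ∘ ⇑π⁻¹) i : ℤ) : ℝ) ^ α i :=
          Equiv.prod_comp π (fun i => (((x ∘ ⇑π⁻¹) i : ℤ) : ℝ) ^ α i)

/-! ### classification of even exponent vectors of degree 6 -/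

def e6 (i : Fin 4) : Fin 4 → ℕ := fun j => if j = i then 6 else 0
def e42 (i j : Fin 4) : Fin 4 → ℕ := fun k => if k = i then 4 else if k = j then 2 else 0
def e222 (i : Fin 4) : Fin 4 → ℕ := fun j => if j = i then 0 else 2

def nA (α : Fin 4 → ℕ) : ℕ := ∑ i : Fin 4, if α = e6 i then 1 else 0
def nB (α : Fin 4 → ℕ) : ℕ := ∑ i : Fin 4, ∑ j : Fin 4, if i ≠ j ∧ α = e42 i j then 1 else 0
def nC (α : Fin 4 → ℕ) : ℕ := ∑ i : Fin 4, if α = e222 i then 1 else 0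

def ClassifyConcl (α : Fin 4 → ℕ) : Prop :=
  ∃ σ : Fin 4 → Fin 4, Function.Bijective σ ∧
      ((α = ![6,0,0,0] ∘ σ ∧ nA α = 1 ∧ nB α = 0 ∧ nC α = 0)
      ∨ (α = ![4,2,0,0] ∘ σ ∧ nA α = 0 ∧ nB α = 1 ∧ nC α = 0)
      ∨ (α = ![2,2,2,0] ∘ σ ∧ nA α = 0 ∧ nB α = 0 ∧ nC α = 1))

set_option maxRecDepth 10000 in
lemma classify_aux (a b c d : ℕ) (hs : a + b + c + d = 6)
    (h0 : a % 2 = 0) (h1 : b % 2 = 0) (h2 : c % 2 = 0) (h3 : d % 2 = 0) :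
    ClassifyConcl ![a,b,c,d] := by
  have ha : a = 0 ∨ a = 2 ∨ a = 4 ∨ a = 6 := by omega
  have hb : b = 0 ∨ b = 2 ∨ b = 4 ∨ b = 6 := by omega
  have hc : c = 0 ∨ c = 2 ∨ c = 4 ∨ c = 6 := by omega
  have hd : d = 0 ∨ d = 2 ∨ d = 4 ∨ d = 6 := by omega
  rcases ha with rfl|rfl|rfl|rfl <;> rcases hb with rfl|rfl|rfl|rfl <;>
    rcases hc with rfl|rfl|rfl|rfl <;> rcases hd with rfl|rfl|rfl|rfl <;>
    first
      | omega
      | (unfold ClassifyConcl; decide)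

lemma Mmom_eq (n : ℕ) (α : Fin 4 → ℕ) (hs : α 0 + α 1 + α 2 + α 3 = 6) :
    Mmom n α = (nA α : ℝ) * Mmom n ![6,0,0,0] + (nB α : ℝ) * Mmom n ![4,2,0,0]
      + (nC α : ℝ) * Mmom n ![2,2,2,0] := by
  by_cases hodd : ∀ i, α i % 2 = 0
  · have hfun : α = ![α 0, α 1, α 2, α 3] := by
      funext i; fin_cases i <;> rfl
    have hcl := classify_aux (α 0) (α 1) (α 2) (α 3) hs (hodd 0) (hodd 1) (hodd 2) (hodd 3)
    rw [← hfun] at hcl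
    obtain ⟨σ, hbij, hcase⟩ := hcl
    have hσ : σ = ⇑(Equiv.ofBijective σ hbij) := rfl
    rcases hcase with ⟨hα, h1, h2, h3⟩ | ⟨hα, h1, h2, h3⟩ | ⟨hα, h1, h2, h3⟩ <;>
      rw [h1, h2, h3, hα, hσ, Mmom_comp] <;> push_cast <;> ring
  · push_neg at hodd
    obtain ⟨i0, hi⟩ := hodd
    have h1 : α i0 % 2 = 1 := by omega
    have hne6 : ∀ i, α ≠ e6 i := by
      intro i h
      have h2 := congrFun h i0
      unfold e6 at h2
      split at h2 <;> omega
    have hne42 : ∀ i j, α ≠ e42 i j := by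
      intro i j h
      have h2 := congrFun h i0
      unfold e42 at h2
      split at h2
      · omega
      · split at h2 <;> omega
    have hne222 : ∀ i, α ≠ e222 i := by
      intro i h
      have h2 := congrFun h i0
      unfold e222 at h2
      split at h2 <;> omega
    have hA : nA α = 0 := by simp [nA, hne6]
    have hB : nB α = 0 := by simp [nB, hne42]
    have hC : nC α = 0 := by simp [nC, hne222]
    rw [Mmom_odd n α i0 h1, hA, hB, hC]
    norm_num

/-! ### coefficient extraction -/

noncomputable def Ffun (g : Fin 4 → ℕ) : Fin 4 →₀ ℕ := Finsupp.equivFunOnFinite.symm g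

lemma coeff_pderiv (j : Fin 4) (β : Fin 4 →₀ ℕ) (P : MvPolynomial (Fin 4) ℝ) :
    coeff β (pderiv j P) = (β j + 1) * coeff (β + Finsupp.single j 1) P := by
  induction P using MvPolynomial.induction_on' with
  | add p q hp hq => simp only [map_add, coeff_add, hp, hq]; ring
  | monomial s a =>
    rw [pderiv_monomial]
    by_cases h : s = β + Finsupp.single j 1
    · subst h
      have h1 : β + Finsupp.single j 1 - Finsupp.single j 1 = β := by
        ext k; simp [Finsupp.single_apply]
      have h2 : ((β + Finsupp.single j 1 : Fin 4 →₀ ℕ)) j = β j + 1 := by simp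
      rw [h1, h2, coeff_monomial, coeff_monomial]
      simp; ring
    · rw [coeff_monomial, coeff_monomial, if_neg h, mul_zero]
      by_cases h2 : s - Finsupp.single j 1 = β
      · rw [if_pos h2]
        by_cases h3 : s j = 0
        · simp [h3]
        · exfalso; apply h
          have : Finsupp.single j 1 ≤ s := by
            rw [Finsupp.single_le_iff]; omega
          rw [← h2, tsub_add_cancel_of_le this]
      · rw [if_neg h2]

lemma lap_coeff (P : MvPolynomial (Fin 4) ℝ)
    (hL : ∑ j : Fin 4, pderiv j (pderiv j P) = 0) (g : Fin 4 → ℕ)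
    (G : Fin 4 → (Fin 4 → ℕ)) (hG : ∀ j k, G j k = g k + (if k = j then 2 else 0)) :
    ∑ j : Fin 4, ((g j + 1) * (g j + 2) : ℝ) * coeff (Ffun (G j)) P = 0 := by
  have h0 : coeff (Ffun g) (∑ j : Fin 4, pderiv j (pderiv j P)) = 0 := by rw [hL]; rfl
  rw [← h0, MvPolynomial.coeff_sum]
  apply Finset.sum_congr rfl
  intro j _
  rw [coeff_pderiv, coeff_pderiv]
  have e1 : ((Ffun g + Finsupp.single j 1 : Fin 4 →₀ ℕ)) j = g j + 1 := by
    simp [Ffun]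
  have e2 : Ffun g + Finsupp.single j 1 + Finsupp.single j 1 = Ffun (G j) := by
    ext k
    simp only [Finsupp.add_apply, Finsupp.single_apply, hG, Ffun,
      Finsupp.coe_equivFunOnFinite_symm, eq_comm]
    by_cases hk : k = j
    · simp [hk]
    · have : j ≠ k := fun h => hk h.symm
      simp [this]
  rw [e1, e2, show (Ffun g) j = g j from rfl]
  push_cast
  ring

/-! ### the theta expansion -/

noncomputable def cfA (P : MvPolynomial (Fin 4) ℝ) : ℝ := ∑ i : Fin 4, coeff (Ffun (e6 i)) P
noncomputable def cfB (P : MvPolynomial (Fin 4) ℝ) : ℝ :=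
  ∑ i : Fin 4, ∑ j : Fin 4, if i ≠ j then coeff (Ffun (e42 i j)) P else 0
noncomputable def cfC (P : MvPolynomial (Fin 4) ℝ) : ℝ := ∑ i : Fin 4, coeff (Ffun (e222 i)) P

lemma support_sum_ite (P : MvPolynomial (Fin 4) ℝ) (g : Fin 4 → ℕ) :
    (∑ d ∈ P.support, if ⇑d = g then coeff d P else 0) = coeff (Ffun g) P := by
  have hiff : ∀ d : Fin 4 →₀ ℕ, (⇑d = g) ↔ (d = Ffun g) := fun d =>
    ⟨fun h => DFunLike.coe_injective h, fun h => by rw [h]; rfl⟩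
  simp only [hiff]
  rw [Finset.sum_ite_eq' P.support (Ffun g) (fun d => coeff d P)]
  by_cases h : Ffun g ∈ P.support
  · rw [if_pos h]
  · rw [if_neg h]; exact (notMem_support_iff.1 h).symm

lemma theta_expand (P : MvPolynomial (Fin 4) ℝ) (hP : P.IsHomogeneous 6) (n : ℕ) :
    ∑ x ∈ intShell 4 n, eval (fun i => (x i : ℝ)) P
      = cfA P * Mmom n ![6,0,0,0] + cfB P * Mmom n ![4,2,0,0] + cfC P * Mmom n ![2,2,2,0] := by
  have step1 : ∑ x ∈ intShell 4 n, eval (fun i => (x i : ℝ)) P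
      = ∑ d ∈ P.support, coeff d P * Mmom n ⇑d := by
    calc ∑ x ∈ intShell 4 n, eval (fun i => (x i : ℝ)) P
        = ∑ x ∈ intShell 4 n, ∑ d ∈ P.support, coeff d P * ∏ i, (x i : ℝ) ^ d i :=
          Finset.sum_congr rfl (fun x _ => eval_eq' _ P)
      _ = ∑ d ∈ P.support, ∑ x ∈ intShell 4 n, coeff d P * ∏ i, (x i : ℝ) ^ d i :=
          Finset.sum_comm
      _ = ∑ d ∈ P.support, coeff d P * Mmom n ⇑d := by
          apply Finset.sum_congr rfl; intro d _
          rw [Mmom, Finset.mul_sum]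
  have hdeg : ∀ d ∈ P.support, (d : Fin 4 → ℕ) 0 + d 1 + d 2 + d 3 = 6 := by
    intro d hd
    have h6 := hP (mem_support_iff.1 hd)
    have : (Finsupp.weight (1 : Fin 4 → ℕ)) d = ∑ i : Fin 4, d i := by
      rw [Finsupp.weight_apply, Finsupp.sum_fintype]
      · simp
      · intro i; simp
    rw [this, Fin.sum_univ_four] at h6
    exact h6
  rw [step1]
  have step2 : ∀ d ∈ P.support, coeff d P * Mmom n ⇑d
      = (coeff d P * (nA ⇑d : ℝ)) * Mmom n ![6,0,0,0]
        + (coeff d P * (nB ⇑d : ℝ)) * Mmom n ![4,2,0,0]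
        + (coeff d P * (nC ⇑d : ℝ)) * Mmom n ![2,2,2,0] := by
    intro d hd
    rw [Mmom_eq n ⇑d (hdeg d hd)]
    ring
  rw [Finset.sum_congr rfl step2]
  rw [Finset.sum_add_distrib, Finset.sum_add_distrib, ← Finset.sum_mul, ← Finset.sum_mul,
    ← Finset.sum_mul]
  have hA : ∑ d ∈ P.support, coeff d P * (nA ⇑d : ℝ) = cfA P := by
    have h1 : ∀ d ∈ P.support, coeff d P * (nA ⇑d : ℝ)
        = ∑ i : Fin 4, if ⇑d = e6 i then coeff d P else 0 := by
      intro d _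
      rw [nA]
      push_cast
      rw [Finset.mul_sum]
      exact Finset.sum_congr rfl (fun i _ => by rw [mul_ite, mul_one, mul_zero])
    rw [Finset.sum_congr rfl h1, Finset.sum_comm]
    exact Finset.sum_congr rfl (fun i _ => support_sum_ite P (e6 i))
  have hC : ∑ d ∈ P.support, coeff d P * (nC ⇑d : ℝ) = cfC P := by
    have h1 : ∀ d ∈ P.support, coeff d P * (nC ⇑d : ℝ)
        = ∑ i : Fin 4, if ⇑d = e222 i then coeff d P else 0 := by
      intro d _
      rw [nC]
      push_cast
      rw [Finset.mul_sum]
      exact Finset.sum_congr rfl (fun i _ => by rw [mul_ite, mul_one, mul_zero])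
    rw [Finset.sum_congr rfl h1, Finset.sum_comm]
    exact Finset.sum_congr rfl (fun i _ => support_sum_ite P (e222 i))
  have hB : ∑ d ∈ P.support, coeff d P * (nB ⇑d : ℝ) = cfB P := by
    have h1 : ∀ d ∈ P.support, coeff d P * (nB ⇑d : ℝ)
        = ∑ i : Fin 4, ∑ j : Fin 4, if i ≠ j ∧ ⇑d = e42 i j then coeff d P else 0 := by
      intro d _
      rw [nB]
      push_cast
      rw [Finset.mul_sum]
      refine Finset.sum_congr rfl (fun i _ => ?_)
      rw [Finset.mul_sum]
      exact Finset.sum_congr rfl (fun j _ => by rw [mul_ite, mul_one, mul_zero])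
    rw [Finset.sum_congr rfl h1, Finset.sum_comm]
    unfold cfB
    refine Finset.sum_congr rfl (fun i _ => ?_)
    rw [Finset.sum_comm]
    refine Finset.sum_congr rfl (fun j _ => ?_)
    by_cases hij : i = j
    · simp [hij]
    · rw [if_pos hij, ← support_sum_ite P (e42 i j)]
      exact Finset.sum_congr rfl (fun d _ => by simp [hij])
  rw [hA, hB, hC]

lemma harm_relations (P : MvPolynomial (Fin 4) ℝ)
    (hL : ∑ j : Fin 4, pderiv j (pderiv j P) = 0) :
    cfB P = -15 * cfA P ∧ cfC P = 30 * cfA P := by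
  have E1 := lap_coeff P hL ![4,0,0,0] ![e6 0, e42 0 1, e42 0 2, e42 0 3] (by decide)
  have E2 := lap_coeff P hL ![0,4,0,0] ![e42 1 0, e6 1, e42 1 2, e42 1 3] (by decide)
  have E3 := lap_coeff P hL ![0,0,4,0] ![e42 2 0, e42 2 1, e6 2, e42 2 3] (by decide)
  have E4 := lap_coeff P hL ![0,0,0,4] ![e42 3 0, e42 3 1, e42 3 2, e6 3] (by decide)
  have F01 := lap_coeff P hL ![2,2,0,0] ![e42 0 1, e42 1 0, e222 3, e222 2] (by decide)
  have F02 := lap_coeff P hL ![2,0,2,0] ![e42 0 2, e222 3, e42 2 0, e222 1] (by decide)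
  have F03 := lap_coeff P hL ![2,0,0,2] ![e42 0 3, e222 2, e222 1, e42 3 0] (by decide)
  have F12 := lap_coeff P hL ![0,2,2,0] ![e222 3, e42 1 2, e42 2 1, e222 0] (by decide)
  have F13 := lap_coeff P hL ![0,2,0,2] ![e222 2, e42 1 3, e222 0, e42 3 1] (by decide)
  have F23 := lap_coeff P hL ![0,0,2,2] ![e222 1, e222 0, e42 2 3, e42 3 2] (by decide)
  norm_num [Fin.sum_univ_four, Matrix.cons_val_two, Matrix.cons_val_three] at E1 E2 E3 E4 F01 F02 F03 F12 F13 F23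
  unfold cfA cfB cfC
  rw [Fin.sum_univ_four, Fin.sum_univ_four, Fin.sum_univ_four, Fin.sum_univ_four,
    Fin.sum_univ_four, Fin.sum_univ_four, Fin.sum_univ_four]
  norm_num [Fin.ext_iff]
  constructor <;> linarith

end Aux

/-- The degree-6 weighted theta coefficients of the `D₄` lattice form a
rank-one family: for all harmonic polynomials `P, Q` of degree 6 in 4 variables and all
positive integers `m, n`,
`(∑_{x∈(D₄)_{2m}} P(x))·(∑_{x∈(D₄)_{2n}} Q(x)) = (∑_{x∈(D₄)_{2n}} P(x))·(∑_{x∈(D₄)_{2m}} Q(x))`.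
(The image of the degree-6 theta map of `D₄` is the one-dimensional space spanned by the
newform `η(z)⁸η(2z)⁸` of weight 8 and level 2.) -/
theorem D4_degree_six_theta_rank_one
    (P Q : MvPolynomial (Fin 4) ℝ) (hP : IsHarmonic 6 P) (hQ : IsHarmonic 6 Q)
    (m n : ℕ) (hm : 0 < m) (hn : 0 < n) :
    (∑ x ∈ intShell 4 (2 * m), eval (fun i => (x i : ℝ)) P) *
      (∑ x ∈ intShell 4 (2 * n), eval (fun i => (x i : ℝ)) Q) =
    (∑ x ∈ intShell 4 (2 * n), eval (fun i => (x i : ℝ)) P) *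
      (∑ x ∈ intShell 4 (2 * m), eval (fun i => (x i : ℝ)) Q) := by
  obtain ⟨hPh, hPL⟩ := hP
  obtain ⟨hQh, hQL⟩ := hQ
  obtain ⟨hPb, hPc⟩ := harm_relations P hPL
  obtain ⟨hQb, hQc⟩ := harm_relations Q hQL
  rw [theta_expand P hPh (2 * m), theta_expand P hPh (2 * n),
      theta_expand Q hQh (2 * m), theta_expand Q hQh (2 * n), hPb, hPc, hQb, hQc]
  ring
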